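/- Let 𝒩 be a finite set of positive integers, let 𝔯 ⊆ [0,1] ∩ ℚ be a finite set with 0, 1 ∈ 𝔯, let Φ := Φ(𝔯), and let n ∈ 𝒩. Then for every real number b with 0 ≤ b < 1 one has ⌊(n+1)·b⌋ = ⌊(n+1)·b_{𝒩_Φ}⌋. -/

import Mathlib

open scoped BigOperators

/-- The hyperstandard set `Φ(𝔯) = {1 - r/l | r ∈ 𝔯, l ∈ ℤ_{>0}} ∩ [0,1]` associated to a
set of rationals `𝔯`. -/
def Phi (R : Set ℚ) : Set ℝ :=
  {x : ℝ | (∃ r ∈ R, ∃ l : ℕ, 0 < l ∧ x = 1 - (r : ℝ) / l) ∧ 0 ≤ x ∧ x ≤ 1}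

/-- The set `Γ(𝒩, Φ(𝔯)) = {1 - r/l + (1/l)·Σ_{n∈𝒩} m_n/(n+1)} ∩ [0,1]`. -/
def Gamma (N : Finset ℕ) (R : Set ℚ) : Set ℝ :=
  {x : ℝ | (∃ r ∈ R, ∃ l : ℕ, 0 < l ∧ ∃ m : ℕ → ℕ,
      x = 1 - (r : ℝ) / l + (1 / (l : ℝ)) * ∑ n ∈ N, (m n : ℝ) / ((n : ℝ) + 1)) ∧
    0 ≤ x ∧ x ≤ 1}

/-- For `n ∈ 𝒩` and `0 ≤ b < 1`, one has
`⌊(n+1)·b⌋ = ⌊(n+1)·b_{𝒩_Φ}⌋`. -/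
theorem stmt2 (N : Finset ℕ) (hN : ∀ n ∈ N, 0 < n)
    (R : Set ℚ) (hRfin : R.Finite) (hRsub : R ⊆ Set.Icc 0 1)
    (h0R : (0 : ℚ) ∈ R) (h1R : (1 : ℚ) ∈ R)
    (n : ℕ) (hnN : n ∈ N)
    (b : ℝ) (hb0 : 0 ≤ b) (hb1 : b < 1)
    (bN : ℝ) (hbN : IsGreatest {b' ∈ Gamma N R | b' ≤ b} bN) :
    ⌊((n : ℝ) + 1) * b⌋ = ⌊((n : ℝ) + 1) * bN⌋ := by
  have hn1 : (0:ℝ) < (n:ℝ) + 1 := by positivity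
  set k : ℤ := ⌊((n : ℝ) + 1) * b⌋ with hk
  have hk0 : 0 ≤ k := Int.floor_nonneg.2 (by positivity)
  have hkb : (k : ℝ) ≤ ((n:ℝ)+1) * b := Int.floor_le _
  have hkub : ((n:ℝ)+1) * b < (k : ℝ) + 1 := Int.lt_floor_add_one _
  have hkn : (k : ℝ) ≤ (n:ℝ) := by
    have : ((n:ℝ)+1) * b < (n:ℝ) + 1 := by nlinarith
    have hlt : (k:ℝ) < (n:ℝ) + 1 := lt_of_le_of_lt hkb this
    have : k < (n:ℤ) + 1 := by exact_mod_cast hlt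
    exact_mod_cast Int.lt_add_one_iff.mp this
  -- k/(n+1) ∈ Gamma
  have hmem : (k : ℝ) / ((n:ℝ)+1) ∈ Gamma N R := by
    refine ⟨⟨1, h1R, 1, one_pos, fun j => if j = n then k.toNat else 0, ?_⟩, by positivity,
      by rw [div_le_one hn1]; linarith⟩
    have hsum : ∑ j ∈ N, ((if j = n then (k.toNat:ℕ) else 0 : ℕ) : ℝ) / ((j : ℝ) + 1)
        = (k : ℝ) / ((n:ℝ)+1) := by
      rw [Finset.sum_eq_single n]
      · have : ((k.toNat : ℕ) : ℝ) = (k : ℝ) := by exact_mod_cast Int.toNat_of_nonneg hk0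
        simp [this]
      · intro j hj hjn; simp [hjn]
      · intro h; exact absurd hnN h
    rw [hsum]; push_cast; ring
  have hle : (k : ℝ) / ((n:ℝ)+1) ≤ bN := hbN.2 ⟨hmem, by rw [div_le_iff₀ hn1]; linarith⟩
  have h1 : (k : ℝ) ≤ ((n:ℝ)+1) * bN := by
    rw [div_le_iff₀ hn1] at hle; linarith
  have h2 : ((n:ℝ)+1) * bN ≤ ((n:ℝ)+1) * b := by
    have := hbN.1.2
    nlinarith
  symm
  rw [Int.floor_eq_iff]
  exact ⟨h1, lt_of_le_of_lt h2 hkub⟩
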